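/- Let d ≥ 1 be an integer and let x, R be real numbers with x ≥ 2. Suppose we are given, for each i ∈ {1,…,3d}, a natural number d_i and integers m_i, k_i such that: (1) Σ_i d_i = d; (2) Σ_i m_i = 0; (3) Σ_i k_i = 0; (4) for every i, 3·d_i + m_i + k_i = 1; (5) for every i, R·d_i + m_i + k_i·x > 0; and (6) Σ_{i : m_i > 0} m_i ≥ 3d − 1. Then R > 3 − 1/d. -/

import Mathlib

/-- Combinatorial core of the obstruction (case `x ≥ 2`): the `3d` components `Fᵢ`
of degree `dᵢ` asymptotic to orbits of type `(-mᵢ, -kᵢ)` force `R > 3 - 1/d`. -/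
theorem stmt_0 (d : ℕ) (hd : 1 ≤ d) (x R : ℝ) (hx : 2 ≤ x)
    (D : Fin (3 * d) → ℕ) (m k : Fin (3 * d) → ℤ)
    (h1 : ∑ i, D i = d)
    (h2 : ∑ i, m i = 0)
    (h3 : ∑ i, k i = 0)
    (h4 : ∀ i, 3 * (D i : ℤ) + m i + k i = 1)
    (h5 : ∀ i, R * (D i : ℝ) + (m i : ℝ) + (k i : ℝ) * x > 0)
    (h6 : ∑ i ∈ Finset.univ.filter (fun i => 0 < m i), m i ≥ 3 * (d : ℤ) - 1) :
    R > 3 - 1 / (d : ℝ) := by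
  have hdR : (0:ℝ) < (d:ℝ) := by exact_mod_cast hd
  have h1d : (0:ℝ) < 1 / (d:ℝ) := by positivity
  by_cases hA : ∃ i, 0 < m i ∧ 1 ≤ D i
  · -- Case A : a component with positive m and positive degree forces R > 5
    obtain ⟨i, hmi, hDi⟩ := hA
    have h4i := h4 i
    have hk : k i ≤ 0 := by omega
    have hkR : (k i : ℝ) ≤ 0 := by exact_mod_cast hk
    have hkx : (k i : ℝ) * x ≤ (k i : ℝ) * 2 := by nlinarith
    have h4r : 3 * (D i : ℝ) + (m i : ℝ) + (k i : ℝ) = 1 := by exact_mod_cast h4i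
    have harea := h5 i
    have hm1 : (1:ℝ) ≤ (m i : ℝ) := by exact_mod_cast hmi
    have hD1 : (1:ℝ) ≤ (D i : ℝ) := by exact_mod_cast hDi
    have hR5 : R > 5 := by nlinarith
    linarith
  · -- Case B : all positive-m components have degree 0
    push_neg at hA
    have hA' : ∀ i, 0 < m i → D i = 0 := fun i hi => by
      have := hA i hi; omega
    have F1 : ∀ i, 0 < m i → m i = 1 := by
      intro i hm
      by_contra hne
      have hD0 : D i = 0 := hA' i hm
      have hDZ : (D i : ℤ) = 0 := by exact_mod_cast hD0
      have h4i := h4 i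
      have hk : k i ≤ -1 := by omega
      have hkR : (k i : ℝ) ≤ -1 := by exact_mod_cast hk
      have hDR : (D i : ℝ) = 0 := by exact_mod_cast hD0
      have h4r : 3 * (D i : ℝ) + (m i : ℝ) + (k i : ℝ) = 1 := by exact_mod_cast h4i
      have harea := h5 i
      rw [hDR] at harea h4r
      nlinarith [mul_nonneg (by linarith : (0:ℝ) ≤ -1 - (k i : ℝ))
        (by linarith : (0:ℝ) ≤ x - 2)]
    set S := Finset.univ.filter (fun i => 0 < m i) with hSdef
    have hSsum : ∑ i ∈ S, m i = (S.card : ℤ) := by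
      rw [Finset.sum_congr rfl (fun i hi => F1 i (Finset.mem_filter.mp hi).2)]
      simp [hSdef]
    have hScard : 3 * d - 1 ≤ S.card := by
      have : 3 * (d:ℤ) - 1 ≤ (S.card : ℤ) := by rw [← hSsum]; exact h6
      omega
    -- find the degree-carrying component j
    have hsum_ne : ∑ i, D i ≠ 0 := by rw [h1]; omega
    obtain ⟨j, -, hj⟩ := Finset.exists_ne_zero_of_sum_ne_zero hsum_ne
    have hjS : j ∉ S := by
      intro hjmem
      have := hA' j (Finset.mem_filter.mp hjmem).2
      exact hj this
    -- S = univ.erase j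
    have hSub : S ⊆ Finset.univ.erase j := by
      intro i hi
      refine Finset.mem_erase.mpr ⟨?_, Finset.mem_univ i⟩
      rintro rfl; exact hjS hi
    have hcard_erase : (Finset.univ.erase j).card = 3 * d - 1 := by
      rw [Finset.card_erase_of_mem (Finset.mem_univ j)]
      simp
    have hSeq : S = Finset.univ.erase j :=
      Finset.eq_of_subset_of_card_le hSub (by omega)
    have hne_mem : ∀ i, i ≠ j → i ∈ S := by
      intro i hij
      rw [hSeq]
      exact Finset.mem_erase.mpr ⟨hij, Finset.mem_univ i⟩
    have hm_ne : ∀ i, i ≠ j → m i = 1 := fun i hij =>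
      F1 i (Finset.mem_filter.mp (hne_mem i hij)).2
    have hD_ne : ∀ i, i ≠ j → D i = 0 := fun i hij =>
      hA' i (by rw [hm_ne i hij]; norm_num)
    -- D j = d
    have hDj : D j = d := by
      rw [← h1, Finset.sum_eq_single_of_mem j (Finset.mem_univ j)
        (fun i _ hij => hD_ne i hij)]
    -- m j = -(3d - 1)
    have hmsum : ∑ i, m i = m j + ∑ i ∈ Finset.univ.erase j, m i :=
      (Finset.add_sum_erase _ m (Finset.mem_univ j)).symm
    have herase_sum : ∑ i ∈ Finset.univ.erase j, m i = 3 * (d:ℤ) - 1 := by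
      rw [Finset.sum_congr rfl (fun i hi => hm_ne i (Finset.mem_erase.mp hi).1)]
      rw [Finset.sum_const, hcard_erase, nsmul_eq_mul, mul_one]
      omega
    have hmj : m j = 1 - 3 * (d:ℤ) := by
      rw [h2, herase_sum] at hmsum; omega
    -- k j = 0
    have hkj : k j = 0 := by
      have h4j := h4 j
      have : (D j : ℤ) = (d:ℤ) := by exact_mod_cast hDj
      omega
    -- area of F_j gives R * d > 3d - 1
    have harea := h5 j
    have hDjR : (D j : ℝ) = (d:ℝ) := by exact_mod_cast hDj
    have hmjR : (m j : ℝ) = 1 - 3 * (d:ℝ) := by exact_mod_cast hmj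
    have hkjR : (k j : ℝ) = 0 := by exact_mod_cast hkj
    have hRd : R * (d:ℝ) > 3 * (d:ℝ) - 1 := by
      rw [hDjR, hmjR, hkjR] at harea; linarith
    have hinv : (1 / (d:ℝ)) * (d:ℝ) = 1 := by field_simp
    nlinarith
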